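/- For a simple symmetric random walk on ℤ started at 0, the maximum absolute value attained during the first excursion away from 0 (i.e., the max of |position| up to the first return to 0) equals z with probability 1/(z(z+1)) for each positive integer z. -/

import Mathlib

open MeasureTheory ProbabilityTheory

namespace SRW

def val (b : Bool) : ℤ := if b then 1 else -1

lemma val_true : val true = 1 := rfl
lemma val_false : val false = -1 := rfl
lemma val_ne_zero (b : Bool) : val b ≠ 0 := by cases b <;> decide
lemma val_not (b : Bool) : val (!b) = - val b := by cases b <;> decide

def sumv (w : List Bool) : ℤ := (w.map val).sum

@[simp] lemma sumv_nil : sumv [] = 0 := rfl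
@[simp] lemma sumv_cons (b : Bool) (w : List Bool) : sumv (b :: w) = val b + sumv w := by
  simp [sumv]
lemma sumv_append (u v : List Bool) : sumv (u ++ v) = sumv u + sumv v := by
  simp [sumv]
lemma sumv_take_succ_cons (b : Bool) (w : List Bool) (k : ℕ) :
    sumv ((b :: w).take (k+1)) = val b + sumv (w.take k) := by
  simp [List.take_succ_cons]
lemma sumv_map_not (w : List Bool) : sumv (w.map Bool.not) = - sumv w := by
  induction w with
  | nil => simp
  | cons b w ih => simp [ih, val_not]; ring

/-- words taking the walk from `a` to `m`, staying strictly between `0` and `m`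
before the end. -/
def Up (a m : ℤ) : Set (List Bool) :=
  {w | (∀ k < w.length, 0 < a + sumv (w.take k) ∧ a + sumv (w.take k) < m) ∧ a + sumv w = m}

/-- words taking the walk from `a` to `0`, staying strictly between `0` and `m`
before the end. -/
def Dn (a m : ℤ) : Set (List Bool) :=
  {w | (∀ k < w.length, 0 < a + sumv (w.take k) ∧ a + sumv (w.take k) < m) ∧ a + sumv w = 0}

noncomputable def wt (w : List Bool) : ENNReal := 2⁻¹ ^ w.length

noncomputable def A (a m : ℤ) : ENNReal := ∑' w : Up a m, wt w

lemma Up_self (m : ℤ) (hm : 0 < m) : Up m m = {[]} := by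
  ext w
  constructor
  · rintro ⟨h1, _⟩
    rcases w with _ | ⟨b, w⟩
    · rfl
    · exfalso
      have := h1 0 (by simp)
      simp only [List.take_zero, sumv_nil, add_zero] at this
      omega
  · rintro rfl
    exact ⟨by simp, by simp [sumv]⟩

lemma Up_zero (m : ℤ) (hm : 0 < m) : Up 0 m = ∅ := by
  ext w
  simp only [Set.mem_empty_iff_false, iff_false]
  rintro ⟨h1, h2⟩
  rcases w with _ | ⟨b, w⟩
  · simp [sumv] at h2; omega
  · have := h1 0 (by simp)
    simp at this

lemma A_self (m : ℤ) (hm : 0 < m) : A m m = 1 := by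
  rw [A, Up_self m hm]
  rw [tsum_eq_single ⟨[], rfl⟩ (by rintro ⟨b, rfl⟩ h; simp at h)]
  simp [wt]

lemma A_zero (m : ℤ) (hm : 0 < m) : A 0 m = 0 := by
  rw [A, Up_zero m hm]
  simp

lemma Up_cons_iff (a m : ℤ) (ha : 0 < a) (ham : a < m) (b : Bool) (w : List Bool) :
    (b :: w) ∈ Up a m ↔ w ∈ Up (a + val b) m := by
  constructor
  · rintro ⟨h1, h2⟩
    refine ⟨fun k hk => ?_, ?_⟩
    · have := h1 (k+1) (by simpa using Nat.succ_lt_succ hk)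
      rwa [sumv_take_succ_cons, ← add_assoc] at this
    · rw [sumv_cons, ← add_assoc] at h2; exact h2
  · rintro ⟨h1, h2⟩
    refine ⟨fun k hk => ?_, ?_⟩
    · rcases k with _ | k
      · simpa using ⟨ha, ham⟩
      · rw [sumv_take_succ_cons, ← add_assoc]
        exact h1 k (by simpa using Nat.lt_of_succ_lt_succ hk)
    · rw [sumv_cons, ← add_assoc]; exact h2

lemma Up_nonempty_mem {w : List Bool} (a m : ℤ) (ham : a ≠ m) (hw : w ∈ Up a m) : w ≠ [] := by
  rintro rfl
  exact ham (by simpa [sumv] using hw.2)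

lemma Up_eq_union (a m : ℤ) (ha : 0 < a) (ham : a < m) :
    Up a m = (List.cons true '' Up (a+1) m) ∪ (List.cons false '' Up (a-1) m) := by
  ext w
  rcases w with _ | ⟨b, w⟩
  · simp only [Set.mem_union, Set.mem_image]
    constructor
    · rintro ⟨-, h2⟩
      simp [sumv] at h2; omega
    · rintro (⟨u, -, h⟩ | ⟨u, -, h⟩) <;> simp at h
  · rw [Up_cons_iff a m ha ham]
    cases b
    · simp only [Set.mem_union, Set.mem_image, val_false]
      constructor
      · intro h; right; exact ⟨w, by simpa [sub_eq_add_neg] using h, rfl⟩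
      · rintro (⟨u, hu, h⟩ | ⟨u, hu, h⟩) <;> simp_all [sub_eq_add_neg]
    · simp only [Set.mem_union, Set.mem_image, val_true]
      constructor
      · intro h; left; exact ⟨w, h, rfl⟩
      · rintro (⟨u, hu, h⟩ | ⟨u, hu, h⟩) <;> simp_all

lemma tsum_cons_image (b : Bool) (W : Set (List Bool)) :
    ∑' w : ↥(List.cons b '' W), wt ↑w = 2⁻¹ * ∑' w : ↥W, wt ↑w := by
  rw [tsum_image _ ((List.cons_injective).injOn)]
  rw [← ENNReal.tsum_mul_left]
  congr 1
  ext w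
  simp [wt, pow_succ, mul_comm]

lemma A_rec (a m : ℤ) (ha : 0 < a) (ham : a < m) :
    A a m = 2⁻¹ * A (a+1) m + 2⁻¹ * A (a-1) m := by
  rw [A, Up_eq_union a m ha ham, Summable.tsum_union_disjoint ?_ ENNReal.summable ENNReal.summable,
    tsum_cons_image, tsum_cons_image]
  · rfl
  · rw [Set.disjoint_iff_forall_ne]
    rintro x ⟨u, -, rfl⟩ y ⟨v, -, rfl⟩ h
    simp at h

lemma Up_prefix {u w : List Bool} (a m : ℤ) (hu : u ∈ Up a m) (hw : w ∈ Up a m)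
    (h : u <+: w) : u = w := by
  rcases eq_or_lt_of_le h.length_le with hl | hl
  · exact h.eq_of_length hl
  · exfalso
    have htake : w.take u.length = u := by
      obtain ⟨t, rfl⟩ := h
      simp [List.take_append_of_le_length le_rfl]
    have := (hw.1 u.length hl).2
    rw [htake, hu.2] at this
    exact lt_irrefl _ this

lemma Dn_eq (a m : ℤ) : Dn a m = (List.map Bool.not) '' Up (m - a) m := by
  have key : ∀ (b c : ℤ) (w : List Bool), b + c = m →
      w ∈ Dn b m → w.map Bool.not ∈ Up c m := by
    intro b c w hbc ⟨h1, h2⟩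
    refine ⟨fun k hk => ?_, ?_⟩
    · rw [List.length_map] at hk
      rw [← List.map_take, sumv_map_not]
      have := h1 k hk
      omega
    · rw [sumv_map_not]; omega
  have key2 : ∀ (b c : ℤ) (w : List Bool), b + c = m →
      w ∈ Up c m → w.map Bool.not ∈ Dn b m := by
    intro b c w hbc ⟨h1, h2⟩
    refine ⟨fun k hk => ?_, ?_⟩
    · rw [List.length_map] at hk
      rw [← List.map_take, sumv_map_not]
      have := h1 k hk
      omega
    · rw [sumv_map_not]; omega
  ext w
  constructor
  · intro hw
    exact ⟨w.map Bool.not, key a (m-a) w (by ring) hw, by simp [Function.comp_def]⟩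
  · rintro ⟨u, hu, rfl⟩
    have := key2 a (m - a) u (by ring) hu
    exact this

noncomputable def B (a m : ℤ) : ENNReal := ∑' w : Dn a m, wt w

lemma B_eq_A (a m : ℤ) : B a m = A (m - a) m := by
  rw [B, Dn_eq, tsum_image _ ((List.map_injective_iff.mpr (fun x y => by cases x <;> cases y <;> simp)).injOn)]
  rw [A]
  congr 1
  ext w
  simp [wt]

lemma solve_rec (m : ℕ) (hm : 0 < m) (f : ℕ → ENNReal) (hb : ∀ k, k ≤ m → f k ≤ 1)
    (h0 : f 0 = 0) (hm1 : f m = 1)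
    (hrec : ∀ k, k + 2 ≤ m → f (k+1) = 2⁻¹ * f k + 2⁻¹ * f (k+2)) :
    ∀ k, k ≤ m → f k = k / m := by
  set g : ℕ → ℝ := fun k => (f k).toReal with hg
  have hfin : ∀ k, k ≤ m → f k ≠ ⊤ := fun k hk => ne_top_of_le_ne_top ENNReal.one_ne_top (hb k hk)
  have hg0 : g 0 = 0 := by simp [hg, h0]
  have hgm : g m = 1 := by simp [hg, hm1]
  have hgrec : ∀ k, k + 2 ≤ m → g (k+1) = 2⁻¹ * g k + 2⁻¹ * g (k+2) := by
    intro k hk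
    have h1 : f (k+1) = 2⁻¹ * f k + 2⁻¹ * f (k+2) := hrec k hk
    have := congrArg ENNReal.toReal h1
    rw [ENNReal.toReal_add (by
        exact ENNReal.mul_ne_top (by simp) (hfin k (by omega))) (by
        exact ENNReal.mul_ne_top (by simp) (hfin (k+2) hk)),
      ENNReal.toReal_mul, ENNReal.toReal_mul] at this
    simpa [hg, ENNReal.toReal_inv] using this
  have step : ∀ k, k + 1 ≤ m → g (k+1) = g k + g 1 := by
    intro k
    induction k with
    | zero => intro _; rw [hg0]; ring
    | succ k ih =>
      intro hk
      have h1 := hgrec k hk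
      have h2 := ih (by omega)
      have : (2:ℝ)⁻¹ ≠ 0 := by norm_num
      nlinarith [h1, h2]
  have lin : ∀ k, k ≤ m → g k = k * g 1 := by
    intro k
    induction k with
    | zero => intro _; simp [hg0]
    | succ k ih =>
      intro hk
      rw [step k hk, ih (by omega)]
      push_cast; ring
  have hg1 : g 1 = 1 / m := by
    have := lin m le_rfl
    rw [hgm] at this
    field_simp
    linarith [this]
  intro k hk
  have hgk : g k = k / m := by rw [lin k hk, hg1]; ring
  have : f k = ENNReal.ofReal (g k) := (ENNReal.ofReal_toReal (hfin k hk)).symm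
  rw [this, hgk, ENNReal.ofReal_div_of_pos (by exact_mod_cast hm)]
  simp [ENNReal.ofReal_natCast]

/-- positive excursions with maximum exactly `z`. -/
def ExcP (z : ℤ) : Set (List Bool) :=
  {w | w ≠ [] ∧ sumv w = 0 ∧ (∀ k, 0 < k → k < w.length → 0 < sumv (w.take k)) ∧
       (∀ k ≤ w.length, sumv (w.take k) ≤ z) ∧ ∃ k ≤ w.length, sumv (w.take k) = z}

/-- excursions with maximum absolute value exactly `z`. -/
def Exc (z : ℕ) : Set (List Bool) :=
  {w | w ≠ [] ∧ sumv w = 0 ∧ (∀ k, 0 < k → k < w.length → sumv (w.take k) ≠ 0) ∧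
       (∀ k ≤ w.length, (sumv (w.take k)).natAbs ≤ z) ∧
       ∃ k ≤ w.length, (sumv (w.take k)).natAbs = z}

lemma sumv_take_succ' (w : List Bool) (k : ℕ) (hk : k < w.length) :
    ∃ b : Bool, sumv (w.take (k+1)) = sumv (w.take k) + val b := by
  induction w generalizing k with
  | nil => simp at hk
  | cons b w ih =>
    rcases k with _ | j
    · exact ⟨b, by simp [List.take_succ_cons]⟩
    · obtain ⟨c, hc⟩ := ih j (by simpa using Nat.lt_of_succ_lt_succ hk)
      exact ⟨c, by simp [List.take_succ_cons, hc]; ring⟩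

lemma length_two_le {w : List Bool} {z : ℕ} (hw : w ∈ Exc z) : 2 ≤ w.length := by
  obtain ⟨h1, h2, -, -, -⟩ := hw
  rcases w with _ | ⟨b, w⟩
  · simp at h1
  rcases w with _ | ⟨c, w⟩
  · simp only [sumv_cons, sumv_nil, add_zero] at h2
    exact absurd h2 (val_ne_zero b)
  · simp

lemma exc_pos_of_first {w : List Bool} {z : ℕ} (hw : w ∈ Exc z)
    (h1 : sumv (w.take 1) = 1) : ∀ k, 0 < k → k < w.length → 0 < sumv (w.take k) := by
  obtain ⟨-, -, h3, -, -⟩ := hw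
  intro k hk hkl
  induction k with
  | zero => omega
  | succ j ih =>
    rcases Nat.eq_zero_or_pos j with rfl | hjpos
    · simp only [Nat.zero_add]; rw [h1]; norm_num
    · have : True := trivial
      have hjl : j < w.length := by omega
      have hpj := ih hjpos hjl
      obtain ⟨b, hb⟩ := sumv_take_succ' w j hjl
      have hne := h3 (j+1) (by omega) hkl
      have := val_ne_zero b
      cases b <;> simp [val] at hb <;> omega

lemma exc_neg_closed {w : List Bool} {z : ℕ} (hw : w ∈ Exc z) :
    w.map Bool.not ∈ Exc z := by
  obtain ⟨h1, h2, h3, h4, k, hk, hk2⟩ := hw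
  refine ⟨by simpa using h1, by rw [sumv_map_not, h2]; ring, ?_, ?_, ?_⟩
  · intro k hk hkl
    rw [List.length_map] at hkl
    rw [← List.map_take, sumv_map_not]
    simpa using h3 k hk hkl
  · intro k hk
    rw [List.length_map] at hk
    rw [← List.map_take, sumv_map_not, Int.natAbs_neg]
    exact h4 k hk
  · refine ⟨k, by simpa using hk, ?_⟩
    rw [← List.map_take, sumv_map_not, Int.natAbs_neg]
    exact hk2

lemma ExcP_subset_Exc {z : ℕ} (hz : 0 < z) : ExcP (z : ℤ) ⊆ Exc z := by
  rintro w ⟨h1, h2, h3, h4, k, hk, hk2⟩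
  have hpos0 : ∀ k ≤ w.length, 0 ≤ sumv (w.take k) := by
    intro k hkk
    rcases Nat.eq_zero_or_pos k with rfl | hkpos
    · simp
    rcases Nat.lt_or_ge k w.length with h | h
    · exact le_of_lt (h3 k hkpos h)
    · have : k = w.length := by omega
      rw [this, List.take_length, h2]
  refine ⟨h1, h2, fun k hk1 hk2 => ne_of_gt (h3 k hk1 hk2), ?_, ?_⟩
  · intro k hkk
    have := hpos0 k hkk
    have := h4 k hkk
    omega
  · refine ⟨k, hk, ?_⟩
    have := hpos0 k hk
    omega

lemma mem_ExcP_of_first {w : List Bool} {z : ℕ} (hz : 0 < z) (hw : w ∈ Exc z)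
    (h1 : sumv (w.take 1) = 1) : w ∈ ExcP (z : ℤ) := by
  have hpos := exc_pos_of_first hw h1
  obtain ⟨e1, e2, e3, e4, k, hk, hk2⟩ := hw
  have hpos0 : ∀ k ≤ w.length, 0 ≤ sumv (w.take k) := by
    intro k hkk
    rcases Nat.eq_zero_or_pos k with rfl | hkpos
    · simp
    rcases Nat.lt_or_ge k w.length with h | h
    · exact le_of_lt (hpos k hkpos h)
    · have : k = w.length := by omega
      rw [this, List.take_length, e2]
  refine ⟨e1, e2, hpos, ?_, ⟨k, hk, ?_⟩⟩
  · intro k hkk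
    have := hpos0 k hkk
    have := e4 k hkk
    omega
  · have := hpos0 k hk
    omega

lemma ExcP_head {w : List Bool} {z : ℤ} (hz : 0 < z) (hw : w ∈ ExcP z) :
    ∃ w₂, w = true :: w₂ := by
  obtain ⟨h1, h2, h3, -, -⟩ := hw
  rcases w with _ | ⟨b, w₂⟩
  · simp at h1
  · cases b
    · exfalso
      rcases w₂ with _ | ⟨c, w₃⟩
      · simp [val] at h2
      · have := h3 1 (by omega) (by simp)
        simp [List.take_succ_cons, val] at this
    · exact ⟨w₂, rfl⟩

lemma Exc_eq_union {z : ℕ} (hz : 0 < z) :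
    Exc z = ExcP (z : ℤ) ∪ (List.map Bool.not '' ExcP (z : ℤ)) := by
  ext w
  constructor
  · intro hw
    have hlen := length_two_le hw
    rcases w with _ | ⟨b, w₂⟩
    · simp at hlen
    have hne := hw.2.2.1 1 (by omega) (by omega)
    simp only [List.take_succ_cons, List.take_zero, sumv_cons, sumv_nil, add_zero] at hne
    cases b
    · right
      have hmem := exc_neg_closed hw
      have : sumv (((false :: w₂).map Bool.not).take 1) = 1 := by
        simp [List.take_succ_cons, val]
      refine ⟨(false :: w₂).map Bool.not, mem_ExcP_of_first hz hmem this, ?_⟩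
      simp [Function.comp_def]
    · left
      exact mem_ExcP_of_first hz hw (by simp [List.take_succ_cons, val])
  · rintro (hw | ⟨u, hu, rfl⟩)
    · exact ExcP_subset_Exc hz hw
    · exact exc_neg_closed (ExcP_subset_Exc hz hu)

lemma Exc_disjoint {z : ℕ} (hz : 0 < z) :
    Disjoint (ExcP (z : ℤ)) (List.map Bool.not '' ExcP (z : ℤ)) := by
  rw [Set.disjoint_left]
  rintro w hw ⟨u, hu, rfl⟩
  obtain ⟨w₂, hw2⟩ := ExcP_head (by exact_mod_cast hz) hw
  obtain ⟨u₂, hu2⟩ := ExcP_head (by exact_mod_cast hz) hu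
  rw [hu2] at hw2
  simp at hw2

lemma glue_pos1 (u v : List Bool) (k : ℕ) (hk : k ≤ u.length) :
    sumv ((true :: (u ++ v)).take (k+1)) = 1 + sumv (u.take k) := by
  rw [sumv_take_succ_cons, List.take_append_of_le_length hk, val_true]

lemma glue_pos2 (u v : List Bool) (j : ℕ) :
    sumv ((true :: (u ++ v)).take (u.length + 1 + j)) = 1 + sumv u + sumv (v.take j) := by
  have h : u.length + 1 + j = (u.length + j) + 1 := by ring
  rw [h, sumv_take_succ_cons, List.take_length_add_append, sumv_append, val_true]
  ring

lemma glue_mem {z : ℤ} (hz : 0 < z) {u v : List Bool} (hu : u ∈ Up 1 z) (hv : v ∈ Dn z (z+1)) :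
    true :: (u ++ v) ∈ ExcP z := by
  obtain ⟨hu1, hu2⟩ := hu
  obtain ⟨hv1, hv2⟩ := hv
  have hvne : 0 < v.length := by
    rcases v with _ | ⟨c, v⟩
    · exfalso; simp only [sumv_nil, add_zero] at hv2; omega
    · simp
  have hlen : (true :: (u ++ v)).length = u.length + v.length + 1 := by simp
  have htot : sumv (true :: (u ++ v)) = 0 := by
    have h := glue_pos2 u v v.length
    rw [List.take_of_length_le (by simp), List.take_length] at h
    omega
  -- general position facts
  have posfact : ∀ k, k ≤ u.length + v.length →
      (k < u.length → sumv ((true :: (u ++ v)).take (k+1)) = 1 + sumv (u.take k)) ∧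
      (u.length ≤ k → sumv ((true :: (u ++ v)).take (k+1)) = z + sumv (v.take (k - u.length))) := by
    intro k hk
    constructor
    · intro h; exact glue_pos1 u v k h.le
    · intro h
      have h2 : k + 1 = u.length + 1 + (k - u.length) := by omega
      rw [h2, glue_pos2, hu2]
  refine ⟨by simp, htot, ?_, ?_, ?_⟩
  · intro k hk hkl
    rcases k with _ | k'
    · omega
    rw [hlen] at hkl
    have hk' : k' ≤ u.length + v.length := by omega
    rcases Nat.lt_or_ge k' u.length with h | h
    · rw [(posfact k' hk').1 h]
      have := hu1 k' h
      omega
    · rw [(posfact k' hk').2 h]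
      have hj : k' - u.length < v.length := by omega
      have := hv1 _ hj
      omega
  · intro k hk
    rcases k with _ | k'
    · simp; omega
    rw [hlen] at hk
    have hk' : k' ≤ u.length + v.length := by omega
    rcases Nat.lt_or_ge k' u.length with h | h
    · rw [(posfact k' hk').1 h]
      have := hu1 k' h
      omega
    · rw [(posfact k' hk').2 h]
      rcases Nat.lt_or_ge (k' - u.length) v.length with hj | hj
      · have := hv1 _ hj
        omega
      · have hj2 : k' - u.length = v.length := by omega
        rw [hj2, List.take_length]
        omega
  · refine ⟨u.length + 1, by rw [hlen]; omega, ?_⟩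
    have h := glue_pos2 u v 0
    simpa [hu2] using h

lemma ExcP_subset_glue {z : ℤ} (hz : 0 < z) :
    ExcP z ⊆ (fun p : List Bool × List Bool => true :: (p.1 ++ p.2)) ''
      ((Up 1 z) ×ˢ (Dn z (z+1))) := by
  classical
  intro w hw
  obtain ⟨h1, h2, h3, h4, hex⟩ := hw
  have hlen2 : 2 ≤ w.length := by
    rcases w with _ | ⟨b, w₂⟩
    · simp at h1
    rcases w₂ with _ | ⟨c, w₃⟩
    · simp only [sumv_cons, sumv_nil, add_zero] at h2
      exact absurd h2 (val_ne_zero b)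
    · simp
  let t := Nat.find hex
  obtain ⟨ht1, ht2⟩ : t ≤ w.length ∧ sumv (w.take t) = z := Nat.find_spec hex
  have htmin : ∀ k, k < t → ¬(k ≤ w.length ∧ sumv (w.take k) = z) :=
    fun k hk => Nat.find_min hex hk
  have ht0 : 0 < t := by
    rcases Nat.eq_zero_or_pos t with h | h
    · exfalso
      rw [h] at ht2
      simp only [List.take_zero, sumv_nil] at ht2
      omega
    · exact h
  have htlen : t < w.length := by
    rcases Nat.lt_or_ge t w.length with h | h
    · exact h
    · exfalso
      have : t = w.length := by omega
      rw [this, List.take_length, h2] at ht2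
      omega
  rcases w with _ | ⟨b, w₂⟩
  · simp at h1
  have hb : b = true := by
    have := h3 1 (by omega) (by simp only [List.length_cons] at hlen2 ⊢; omega)
    simp only [List.take_succ_cons, List.take_zero, sumv_cons, sumv_nil, add_zero] at this
    cases b
    · simp [val] at this
    · rfl
  subst hb
  have hlw : (true :: w₂).length = w₂.length + 1 := by simp
  have hpos : ∀ k, sumv ((true :: w₂).take (k+1)) = 1 + sumv (w₂.take k) := by
    intro k
    rw [sumv_take_succ_cons, val_true]
  refine ⟨(w₂.take (t-1), w₂.drop (t-1)), ⟨⟨?_, ?_⟩, ⟨?_, ?_⟩⟩, ?_⟩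
  · -- Up interior
    intro k hk
    rw [List.length_take] at hk
    have hkt : k < t - 1 := by omega
    have htake : (w₂.take (t-1)).take k = w₂.take k := by
      rw [List.take_take]
      congr 1
      omega
    rw [htake]
    constructor
    · have := h3 (k+1) (by omega) (by rw [hlw]; omega)
      rw [hpos k] at this
      omega
    · have hle := h4 (k+1) (by rw [hlw]; omega)
      have hne := htmin (k+1) (by omega)
      rw [hpos k] at hle hne
      push_neg at hne
      have := hne (by rw [hlw]; omega)
      omega
  · -- Up end
    have h := hpos (t-1)
    have ht' : t - 1 + 1 = t := by omega
    rw [ht'] at h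
    rw [← h, ht2]
  · -- Dn interior
    intro j hj
    rw [List.length_drop] at hj
    have hkey : ∀ j', sumv ((true :: w₂).take (t + j')) = z + sumv ((w₂.drop (t-1)).take j') := by
      intro j'
      have hsplit : (true :: w₂).take (t + j') =
          (true :: w₂).take t ++ (((true :: w₂).drop t).take j') := List.take_add
      have hdrop : (true :: w₂).drop t = w₂.drop (t-1) := by
        have h5 : t = (t-1) + 1 := by omega
        conv_lhs => rw [h5]
        rw [List.drop_succ_cons]
      rw [hsplit, sumv_append, ht2, hdrop]
    rw [← hkey j]
    constructor
    · exact h3 (t+j) (by omega) (by rw [hlw]; omega)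
    · have := h4 (t+j) (by rw [hlw]; omega)
      omega
  · -- Dn end
    have hkey : sumv ((true :: w₂).take (t + (w₂.length - (t-1)))) =
        z + sumv ((w₂.drop (t-1)).take (w₂.length - (t-1))) := by
      have hsplit : (true :: w₂).take (t + (w₂.length - (t-1))) =
          (true :: w₂).take t ++ (((true :: w₂).drop t).take (w₂.length - (t-1))) :=
        List.take_add
      have hdrop : (true :: w₂).drop t = w₂.drop (t-1) := by
        have h5 : t = (t-1) + 1 := by omega
        conv_lhs => rw [h5]
        rw [List.drop_succ_cons]
      rw [hsplit, sumv_append, ht2, hdrop]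
    have hfull : (true :: w₂).take (t + (w₂.length - (t-1))) = true :: w₂ := by
      apply List.take_of_length_le
      rw [hlw]
      omega
    have hvfull : (w₂.drop (t-1)).take (w₂.length - (t-1)) = w₂.drop (t-1) := by
      apply List.take_of_length_le
      rw [List.length_drop]
    rw [hfull, h2, hvfull] at hkey
    show z + sumv (w₂.drop (t-1)) = 0
    omega
  · -- glue back
    simp only
    rw [List.take_append_drop]

lemma glue_injOn {z : ℤ} (hz : 0 < z) :
    Set.InjOn (fun p : List Bool × List Bool => true :: (p.1 ++ p.2))
      ((Up 1 z) ×ˢ (Dn z (z+1))) := by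
  have key : ∀ (a b a' b' : List Bool), a ∈ Up 1 z → a' ∈ Up 1 z →
      a ++ b = a' ++ b' → a.length ≤ a'.length → a = a' := by
    intro a b a' b' ha ha' habb hle
    have hpre : a <+: a' ++ b' := habb ▸ List.prefix_append a b
    have : a <+: a' := List.prefix_of_prefix_length_le hpre (List.prefix_append a' b') hle
    exact Up_prefix 1 z ha ha' this
  rintro ⟨u, v⟩ ⟨hu, hv⟩ ⟨u', v'⟩ ⟨hu', hv'⟩ h
  simp only [List.cons.injEq, true_and] at h
  have huu : u = u' := by
    rcases le_total u.length u'.length with hl | hl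
    · exact key u v u' v' hu hu' h hl
    · exact (key u' v' u v hu' hu h.symm hl).symm
  subst huu
  have : v = v' := List.append_cancel_left h
  simp [this]

lemma tsum_ExcP {z : ℤ} (hz : 0 < z) :
    ∑' w : ExcP z, wt ↑w = 2⁻¹ * (A 1 z * B z (z+1)) := by
  have himg : ExcP z = (fun p : List Bool × List Bool => true :: (p.1 ++ p.2)) ''
      ((Up 1 z) ×ˢ (Dn z (z+1))) := by
    apply Set.Subset.antisymm (ExcP_subset_glue hz)
    rintro w ⟨⟨u, v⟩, ⟨hu, hv⟩, rfl⟩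
    exact glue_mem hz hu hv
  rw [himg, tsum_image _ (glue_injOn hz)]
  have hwt : ∀ p : ↥((Up 1 z) ×ˢ (Dn z (z+1))),
      wt (true :: ((p : List Bool × List Bool).1 ++ (p : List Bool × List Bool).2)) =
      2⁻¹ * (wt (p : List Bool × List Bool).1 * wt (p : List Bool × List Bool).2) := by
    intro p
    simp [wt, pow_succ, pow_add]
    ring
  rw [tsum_congr hwt, ENNReal.tsum_mul_left]
  congr 1
  rw [← ((Equiv.Set.prod (Up 1 z) (Dn z (z+1))).symm.tsum_eq
    (fun p => wt (p : List Bool × List Bool).1 * wt (p : List Bool × List Bool).2))]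
  have : ∀ y : ↥(Up 1 z) × ↥(Dn z (z+1)),
      (((Equiv.Set.prod (Up 1 z) (Dn z (z+1))).symm y : List Bool × List Bool).1) = ↑y.1 ∧
      (((Equiv.Set.prod (Up 1 z) (Dn z (z+1))).symm y : List Bool × List Bool).2) = ↑y.2 :=
    fun y => ⟨rfl, rfl⟩
  rw [tsum_congr (fun y => by rw [(this y).1, (this y).2])]
  calc ∑' (b : ↥(Up 1 z) × ↥(Dn z (z+1))), wt ↑b.1 * wt ↑b.2
      = ∑' (u : ↥(Up 1 z)), ∑' (v : ↥(Dn z (z+1))), wt ↑u * wt ↑v :=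
        ENNReal.tsum_prod (f := fun (u : ↥(Up 1 z)) (v : ↥(Dn z (z+1))) => wt ↑u * wt ↑v)
    _ = ∑' (u : ↥(Up 1 z)), wt ↑u * ∑' (v : ↥(Dn z (z+1))), wt ↑v :=
        tsum_congr fun u => ENNReal.tsum_mul_left
    _ = (∑' (u : ↥(Up 1 z)), wt ↑u) * ∑' (v : ↥(Dn z (z+1))), wt ↑v := ENNReal.tsum_mul_right
    _ = A 1 z * B z (z+1) := rfl

lemma sumv_take_eq_sum (w : List Bool) : ∀ n, n ≤ w.length →
    sumv (w.take n) = ∑ i ∈ Finset.range n, val (w.getD i true) := by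
  intro n
  induction n with
  | zero => intro _; simp
  | succ k ih =>
    intro hn
    have hk : k < w.length := by omega
    rw [Finset.sum_range_succ, ← ih (by omega)]
    have htk : w.take (k+1) = w.take k ++ [w[k]] := by
      rw [List.take_succ, List.getElem?_eq_getElem hk]
      rfl
    rw [htk, sumv_append, List.getD_eq_getElem _ _ hk]
    simp [sumv]

lemma Exc_prefix {z : ℕ} {u w : List Bool} (hu : u ∈ Exc z) (hw : w ∈ Exc z)
    (h : u <+: w) : u = w := by
  rcases eq_or_lt_of_le h.length_le with hl | hl
  · exact h.eq_of_length hl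
  · exfalso
    have htake : w.take u.length = u := by
      obtain ⟨t, rfl⟩ := h
      simp [List.take_append_of_le_length le_rfl]
    have hlpos : 0 < u.length := List.length_pos_iff.mpr hu.1
    have := hw.2.2.1 u.length hlpos hl
    rw [htake, hu.2.1] at this
    exact this rfl

lemma tsum_Exc {z : ℕ} (hz : 0 < z) :
    ∑' w : Exc z, wt ↑w = 2 * ∑' w : ExcP (z : ℤ), wt ↑w := by
  have hzz : (0:ℤ) < (z:ℤ) := by exact_mod_cast hz
  rw [Exc_eq_union hz, Summable.tsum_union_disjoint (Exc_disjoint hz) ENNReal.summable ENNReal.summable]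
  have himg : ∑' w : ↥(List.map Bool.not '' ExcP (z:ℤ)), wt ↑w = ∑' w : ExcP (z:ℤ), wt ↑w := by
    rw [tsum_image _ ((List.map_injective_iff.mpr
      (fun x y => by cases x <;> cases y <;> simp)).injOn)]
    exact tsum_congr fun w => by simp [wt]
  rw [himg]
  ring

lemma A_formula (m : ℕ) (hm : 0 < m)
    (hbdd : ∀ a : ℕ, a ≤ m → A (a : ℤ) (m : ℤ) ≤ 1) :
    A 1 (m : ℤ) = 1 / (m : ENNReal) := by
  have hmz : (0:ℤ) < (m:ℤ) := by exact_mod_cast hm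
  have key := solve_rec m hm (fun k => A (k : ℤ) (m : ℤ)) hbdd
    (A_zero _ hmz) (A_self _ hmz) ?_ 1 hm
  · simpa [one_div] using key
  · intro k hk
    have h1 : (0:ℤ) < ((k:ℤ)+1) := by omega
    have h2 : ((k:ℤ)+1) < (m:ℤ) := by exact_mod_cast by omega
    have := A_rec ((k:ℤ)+1) (m:ℤ) h1 h2
    simp only [add_sub_cancel_right] at this
    have e1 : ((k+1 : ℕ) : ℤ) = (k:ℤ)+1 := by push_cast; ring
    have e2 : ((k+2 : ℕ) : ℤ) = (k:ℤ)+1+1 := by push_cast; ring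
    simp only [e1, e2, this]
    ring

section Measure

variable {Ω : Type*} [MeasurableSpace Ω] {μ : Measure Ω} {step : ℕ → Ω → ℤ}

def Cyl (step : ℕ → Ω → ℤ) (w : List Bool) : Set Ω :=
  ⋂ i ∈ Finset.range w.length, step i ⁻¹' {val (w.getD i true)}

lemma mem_Cyl {w : List Bool} {ω : Ω} :
    ω ∈ Cyl step w ↔ ∀ i < w.length, step i ω = val (w.getD i true) := by
  simp [Cyl]

lemma Cyl_measurable (hmeas : ∀ i, Measurable (step i)) (w : List Bool) :
    MeasurableSet (Cyl step w) :=
  MeasurableSet.biInter (Finset.range _).countable_toSet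
    (fun i _ => (hmeas i) (measurableSet_singleton _))

lemma meas_single [IsProbabilityMeasure μ]
    (hdist : ∀ i, μ {ω | step i ω = 1} = 1 / 2 ∧ μ {ω | step i ω = -1} = 1 / 2)
    (i : ℕ) (b : Bool) : μ (step i ⁻¹' {val b}) = 2⁻¹ := by
  cases b
  · have : step i ⁻¹' {val false} = {ω | step i ω = -1} := by ext ω; simp [val]
    rw [this, (hdist i).2, one_div]
  · have : step i ⁻¹' {val true} = {ω | step i ω = 1} := by ext ω; simp [val]
    rw [this, (hdist i).1, one_div]

lemma meas_Cyl [IsProbabilityMeasure μ]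
    (hindep : iIndepFun step μ)
    (hdist : ∀ i, μ {ω | step i ω = 1} = 1 / 2 ∧ μ {ω | step i ω = -1} = 1 / 2)
    (w : List Bool) : μ (Cyl step w) = wt w := by
  rw [Cyl, hindep.measure_inter_preimage_eq_mul (Finset.range w.length)
    (fun i _ => measurableSet_singleton _)]
  rw [Finset.prod_congr rfl (fun i _ => meas_single hdist i _)]
  simp [wt, Finset.prod_const, Finset.card_range]

lemma val_inj {b c : Bool} (h : val b = val c) : b = c := by
  cases b <;> cases c <;> simp [val] at h ⊢

lemma prefix_of_mem_Cyl {u w : List Bool} {ω : Ω} (hu : ω ∈ Cyl step u)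
    (hw : ω ∈ Cyl step w) (hl : u.length ≤ w.length) : u <+: w := by
  rw [mem_Cyl] at hu hw
  have : u = w.take u.length := by
    apply List.ext_getElem
    · rw [List.length_take]; omega
    · intro i h1 h2
      have hiu : i < u.length := h1
      have hiw : i < w.length := by omega
      have e1 := hu i hiu
      have e2 := hw i hiw
      rw [List.getD_eq_getElem _ _ hiu] at e1
      rw [List.getD_eq_getElem _ _ hiw] at e2
      have : val u[i] = val w[i] := by rw [← e1, ← e2]
      rw [List.getElem_take]
      exact val_inj this
  rw [this]
  exact List.take_prefix _ _

lemma meas_union_Cyl [IsProbabilityMeasure μ] (hmeas : ∀ i, Measurable (step i))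
    (hindep : iIndepFun step μ)
    (hdist : ∀ i, μ {ω | step i ω = 1} = 1 / 2 ∧ μ {ω | step i ω = -1} = 1 / 2)
    (W : Set (List Bool)) (hpf : ∀ u ∈ W, ∀ w ∈ W, u <+: w → u = w) :
    μ (⋃ w : ↥W, Cyl step w) = ∑' w : ↥W, wt ↑w := by
  rw [measure_iUnion ?_ (fun w => Cyl_measurable hmeas _)]
  · exact tsum_congr fun w => meas_Cyl hindep hdist _
  · intro a b hab
    rw [Function.onFun, Set.disjoint_left]
    intro ω hωa hωb
    apply hab
    apply Subtype.ext
    rcases le_total (a : List Bool).length (b : List Bool).length with hl | hl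
    · exact hpf _ a.2 _ b.2 (prefix_of_mem_Cyl hωa hωb hl)
    · exact (hpf _ b.2 _ a.2 (prefix_of_mem_Cyl hωb hωa hl)).symm

lemma tsum_le_one [IsProbabilityMeasure μ] (hmeas : ∀ i, Measurable (step i))
    (hindep : iIndepFun step μ)
    (hdist : ∀ i, μ {ω | step i ω = 1} = 1 / 2 ∧ μ {ω | step i ω = -1} = 1 / 2)
    (W : Set (List Bool)) (hpf : ∀ u ∈ W, ∀ w ∈ W, u <+: w → u = w) :
    ∑' w : ↥W, wt ↑w ≤ 1 := by
  rw [← meas_union_Cyl hmeas hindep hdist W hpf]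
  exact prob_le_one

end Measure

end SRW

open SRW in
/-- For simple symmetric random walk on `ℤ` started at `0` (with i.i.d. `±1` steps),
the maximum absolute value attained up to the first return to `0` equals `z` with
probability `1/(z(z+1))` for each positive integer `z`. -/
theorem stmt_1 {Ω : Type*} [MeasurableSpace Ω] (μ : Measure Ω) [IsProbabilityMeasure μ]
    (step : ℕ → Ω → ℤ) (hmeas : ∀ i, Measurable (step i))
    (hindep : iIndepFun step μ)
    (hdist : ∀ i, μ {ω | step i ω = 1} = 1 / 2 ∧ μ {ω | step i ω = -1} = 1 / 2)
    (S : ℕ → Ω → ℤ) (hS : ∀ n ω, S n ω = ∑ i ∈ Finset.range n, step i ω)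
    (T : Ω → ℕ) (hT : ∀ ω, T ω = sInf {n : ℕ | 1 ≤ n ∧ S n ω = 0})
    (z : ℕ) (hz : 0 < z) :
    μ {ω | (Finset.range (T ω + 1)).sup (fun n => (S n ω).natAbs) = z} =
      1 / ((z : ENNReal) * ((z : ENNReal) + 1)) := by
  classical
  set E := {ω | (Finset.range (T ω + 1)).sup (fun n => (S n ω).natAbs) = z} with hE
  have hS0 : ∀ ω, S 0 ω = 0 := fun ω => by simp [hS]
  have hstepval : ∀ (w : List Bool) (ω : Ω), ω ∈ Cyl step w →
      ∀ n ≤ w.length, S n ω = sumv (w.take n) := by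
    intro w ω hω n hn
    rw [hS, sumv_take_eq_sum w n hn]
    refine Finset.sum_congr rfl fun i hi => ?_
    rw [Finset.mem_range] at hi
    exact (mem_Cyl.mp hω) i (by omega)
  -- every excursion-cylinder is inside E
  have hsub1 : ∀ w ∈ Exc z, Cyl step w ⊆ E := by
    intro w hw ω hω
    obtain ⟨h1, h2, h3, h4, k0, hk0, hk02⟩ := hw
    have hSn := hstepval w ω hω
    have hlen1 : 1 ≤ w.length := List.length_pos_iff.mpr h1
    have hTω : T ω = w.length := by
      rw [hT]
      have hmem : w.length ∈ {n : ℕ | 1 ≤ n ∧ S n ω = 0} :=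
        ⟨hlen1, by rw [hSn w.length le_rfl, List.take_length, h2]⟩
      apply le_antisymm (Nat.sInf_le hmem)
      by_contra hlt
      push_neg at hlt
      obtain ⟨hge1, hzero⟩ := Nat.sInf_mem (⟨w.length, hmem⟩ :
        {n : ℕ | 1 ≤ n ∧ S n ω = 0}.Nonempty)
      rw [hSn _ (le_of_lt hlt)] at hzero
      exact (h3 _ (by omega) hlt) hzero
    show (Finset.range (T ω + 1)).sup (fun n => (S n ω).natAbs) = z
    rw [hTω]
    apply le_antisymm
    · apply Finset.sup_le
      intro n hn
      rw [Finset.mem_range] at hn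
      show (S n ω).natAbs ≤ z
      rw [hSn n (by omega)]
      exact h4 n (by omega)
    · have hk0mem : k0 ∈ Finset.range (w.length + 1) := Finset.mem_range.mpr (by omega)
      have hle := Finset.le_sup (f := fun n => (S n ω).natAbs) hk0mem
      have : (S k0 ω).natAbs = z := by rw [hSn k0 hk0]; exact hk02
      exact le_trans (le_of_eq this.symm) hle
  -- the bad event
  set N := ⋃ i, {ω | step i ω ≠ 1 ∧ step i ω ≠ -1} with hN
  have hNnull : μ N = 0 := by
    apply measure_iUnion_null
    intro i
    have hA1 : MeasurableSet {ω | step i ω = 1} := (hmeas i) (measurableSet_singleton 1)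
    have hA2 : MeasurableSet {ω | step i ω = -1} := (hmeas i) (measurableSet_singleton (-1))
    have hdisj : Disjoint {ω | step i ω = 1} {ω | step i ω = -1} := by
      rw [Set.disjoint_left]
      intro ω hω1 hω2
      simp only [Set.mem_setOf_eq] at hω1 hω2
      rw [hω1] at hω2
      norm_num at hω2
    have hcup : {ω | step i ω ≠ 1 ∧ step i ω ≠ -1} =
        ({ω | step i ω = 1} ∪ {ω | step i ω = -1})ᶜ := by
      ext ω; simp [not_or]
    rw [hcup, prob_compl_eq_zero_iff (hA1.union hA2), measure_union hdisj hA2,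
      (hdist i).1, (hdist i).2]
    rw [ENNReal.add_halves]
  have hsub2 : E ⊆ (⋃ w : ↥(Exc z), Cyl step ↑w) ∪ N := by
    intro ω hω
    by_cases hωN : ω ∈ N
    · exact Or.inr hωN
    left
    have hpm : ∀ i, step i ω = 1 ∨ step i ω = -1 := by
      intro i
      rw [hN] at hωN
      simp only [Set.mem_iUnion, Set.mem_setOf_eq, not_exists, not_and, not_not] at hωN
      by_cases h : step i ω = 1
      · exact Or.inl h
      · exact Or.inr (hωN i h)
    set w : List Bool := (List.range (T ω)).map (fun i => decide (step i ω = 1)) with hw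
    have hwlen : w.length = T ω := by simp [hw]
    have hwget : ∀ i < T ω, val (w.getD i true) = step i ω := by
      intro i hi
      have hi' : i < w.length := by omega
      rw [List.getD_eq_getElem _ _ hi']
      have : w[i] = decide (step i ω = 1) := by
        simp [hw]
      rw [this]
      rcases hpm i with h | h
      · simp [h, val]
      · rw [h]; norm_num [val]
    have hωC : ω ∈ Cyl step w :=
      mem_Cyl.mpr fun i hi => (hwget i (by omega)).symm
    have hEω : (Finset.range (T ω + 1)).sup (fun n => (S n ω).natAbs) = z := hω
    have hMne : {n : ℕ | 1 ≤ n ∧ S n ω = 0}.Nonempty := by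
      by_contra h
      rw [Set.not_nonempty_iff_eq_empty] at h
      have hT0 : T ω = 0 := by rw [hT, h, Nat.sInf_empty]
      rw [hT0] at hEω
      simp [hS0] at hEω
      omega
    have hTmem : 1 ≤ T ω ∧ S (T ω) ω = 0 := by
      have := Nat.sInf_mem hMne
      rw [← hT ω] at this
      exact this
    have hSn := hstepval w ω hωC
    refine Set.mem_iUnion.mpr ⟨⟨w, ?_, ?_, ?_, ?_, ?_⟩, hωC⟩
    · rw [← List.length_pos_iff]; omega
    · rw [show sumv w = sumv (w.take w.length) by rw [List.take_length], ← hSn _ le_rfl, hwlen]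
      exact hTmem.2
    · intro k hk1 hk2
      rw [← hSn k (by omega)]
      intro hzero
      have hkM : k ∈ {n : ℕ | 1 ≤ n ∧ S n ω = 0} := ⟨by omega, hzero⟩
      have := Nat.sInf_le hkM
      rw [← hT ω] at this
      omega
    · intro k hk
      rw [← hSn k hk]
      have hkmem : k ∈ Finset.range (T ω + 1) := Finset.mem_range.mpr (by omega)
      have := Finset.le_sup (f := fun n => (S n ω).natAbs) hkmem
      rw [hEω] at this
      exact this
    · obtain ⟨k, hkmem, hksup⟩ := Finset.exists_mem_eq_sup (Finset.range (T ω + 1))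
        ⟨0, Finset.mem_range.mpr (by omega)⟩ (fun n => (S n ω).natAbs)
      rw [Finset.mem_range] at hkmem
      refine ⟨k, by omega, ?_⟩
      rw [← hSn k (by omega)]
      rw [hksup] at hEω
      exact hEω
  -- measure computation
  have hmain : μ E = μ (⋃ w : ↥(Exc z), Cyl step ↑w) := by
    apply le_antisymm
    · calc μ E ≤ μ ((⋃ w : ↥(Exc z), Cyl step ↑w) ∪ N) := measure_mono hsub2
        _ ≤ μ (⋃ w : ↥(Exc z), Cyl step ↑w) + μ N := measure_union_le _ _
        _ = μ (⋃ w : ↥(Exc z), Cyl step ↑w) := by rw [hNnull, add_zero]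
    · exact measure_mono (Set.iUnion_subset fun w => hsub1 _ w.2)
  have hbdd : ∀ (m : ℕ), ∀ a : ℕ, a ≤ m → A (a : ℤ) (m : ℤ) ≤ 1 := by
    intro m a ha
    exact tsum_le_one hmeas hindep hdist _ (fun u hu w hw h => Up_prefix _ _ hu hw h)
  have hz1 : (0:ℤ) < (z:ℤ) := by exact_mod_cast hz
  rw [hmain, meas_union_Cyl hmeas hindep hdist _ (fun u hu w hw h => Exc_prefix hu hw h),
    tsum_Exc hz, tsum_ExcP hz1, B_eq_A]
  have e1 : ((z:ℤ)+1) - (z:ℤ) = 1 := by ring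
  rw [e1]
  have e2 : ((z:ℤ)+1) = (((z+1:ℕ)):ℤ) := by push_cast; ring
  rw [e2, A_formula z hz (hbdd z), A_formula (z+1) (by omega) (hbdd (z+1))]
  have hz0 : (z : ENNReal) ≠ 0 := by exact_mod_cast hz.ne'
  have hztop : (z : ENNReal) ≠ ⊤ := ENNReal.natCast_ne_top z
  rw [← mul_assoc, ENNReal.mul_inv_cancel (by norm_num) (by norm_num), one_mul]
  rw [one_div, one_div, one_div, ← ENNReal.mul_inv (Or.inl hz0) (Or.inr (by push_cast; exact_mod_cast Nat.succ_ne_zero z))]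
  push_cast
  ring_nf
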